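/- Let p be a prime and let K be a finite group. Let Z∞(K) denote the hypercenter of K, i.e., the stable (largest) term of the upper central series of K. Then K has a normal p-complement if and only if the quotient group K/Z∞(K) has a normal p-complement. -/

import Mathlib

open Subgroup QuotientGroup

/-- p-nilpotency passes to quotients/surjective images. -/
lemma HNPC_of_surjective {p : ℕ} (hp : p.Prime) {K L : Type*} [Group K] [Group L]
    (f : K →* L) (hf : Function.Surjective f)
    (h : ∃ N : Subgroup K, N.Normal ∧ Nat.Coprime (Nat.card N) p ∧ ∃ m : ℕ, N.index = p ^ m) :
    ∃ N : Subgroup L, N.Normal ∧ Nat.Coprime (Nat.card N) p ∧ ∃ m : ℕ, N.index = p ^ m := by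
  obtain ⟨N, hNn, hNc, m, hNi⟩ := h
  refine ⟨N.map f, hNn.map f hf, ?_, ?_⟩
  · have h1 : Nat.card (N.map f) ∣ Nat.card N := by
      have := Subgroup.card_dvd_of_surjective (f.subgroupMap N)
        (f.subgroupMap_surjective N)
      simpa using this
    exact Nat.Coprime.coprime_dvd_left h1 hNc
  · have h2 : (N.map f).index ∣ N.index := (N.index_map_dvd hf)
    rw [hNi] at h2
    obtain ⟨k, _, hk⟩ := (Nat.dvd_prime_pow hp).mp h2
    exact ⟨k, hk⟩

lemma HNPC_of_mulEquiv {p : ℕ} (hp : p.Prime) {K L : Type*} [Group K] [Group L]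
    (e : K ≃* L)
    (h : ∃ N : Subgroup K, N.Normal ∧ Nat.Coprime (Nat.card N) p ∧ ∃ m : ℕ, N.index = p ^ m) :
    ∃ N : Subgroup L, N.Normal ∧ Nat.Coprime (Nat.card N) p ∧ ∃ m : ℕ, N.index = p ^ m :=
  HNPC_of_surjective hp e.toMonoidHom e.surjective h

/-- The hypercenter of a group: the stable (largest) term of the upper central
series, i.e. the supremum of all terms of the upper central series. -/
def hypercenter (K : Type*) [Group K] : Subgroup K :=
  ⨆ n : ℕ, _root_.upperCentralSeries K n

instance hypercenter_normal (K : Type*) [Group K] : (hypercenter K).Normal := by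
  constructor
  intro x hx g
  rw [hypercenter, Subgroup.mem_iSup_of_directed (K := fun n => _root_.upperCentralSeries K n) (by exact (_root_.upperCentralSeries_mono K).directed_le)] at hx ⊢
  obtain ⟨n, hn⟩ := hx
  exact ⟨n, (inferInstance : (Subgroup.upperCentralSeries K n).Normal).conj_mem x hn g⟩

/-- A finite group has a normal `p`-complement if it has a normal subgroup of
order coprime to `p` and index a power of `p`. -/
def HasNormalPComplement (p : ℕ) (K : Type*) [Group K] : Prop :=
  ∃ N : Subgroup K, N.Normal ∧ Nat.Coprime (Nat.card N) p ∧ ∃ m : ℕ, N.index = p ^ m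



lemma mem_hypercenter_iff {K : Type*} [Group K] (x : K) :
    x ∈ hypercenter K ↔ ∃ n, x ∈ Subgroup.upperCentralSeries K n := by
  rw [hypercenter]; exact Subgroup.mem_iSup_of_directed (Subgroup.upperCentralSeries_mono K).directed_le

lemma hypercenter_eq_bot {K : Type*} [Group K] (h : Subgroup.center K = ⊥) :
    hypercenter K = ⊥ := by
  have key : ∀ n, Subgroup.upperCentralSeries K n = ⊥ := by
    intro n
    induction n with
    | zero => rfl
    | succ n ih =>
      rw [eq_bot_iff]
      intro x hx
      rw [Subgroup.mem_upperCentralSeries_succ_iff] at hx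
      have : x ∈ Subgroup.center K := by
        rw [Subgroup.mem_center_iff]
        intro g
        have := hx g
        rw [ih, Subgroup.mem_bot] at this
        have h1 : x * g * x⁻¹ * g⁻¹ = 1 := this
        have h2 : x * g = g * x := by
          have := mul_eq_one_iff_eq_inv.mp h1
          rw [inv_inv] at this
          have h3 : x * g * x⁻¹ = g := by
            rw [this]
          calc x * g = (x * g * x⁻¹) * x := by group
            _ = g * x := by rw [h3]
        exact h2.symm
      rw [h, Subgroup.mem_bot] at this
      simp [this]
  rw [eq_bot_iff]
  intro x hx
  obtain ⟨n, hn⟩ := (mem_hypercenter_iff x).mp hx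
  rw [key n] at hn
  exact hn

lemma comap_hypercenter (K : Type*) [Group K] :
    Subgroup.comap (QuotientGroup.mk' (Subgroup.center K))
      (hypercenter (K ⧸ Subgroup.center K)) = hypercenter K := by
  ext x
  rw [Subgroup.mem_comap, mem_hypercenter_iff, mem_hypercenter_iff]
  constructor
  · rintro ⟨n, hn⟩
    refine ⟨n + 1, ?_⟩
    rw [← Subgroup.comap_upperCentralSeries_quotient_center]
    exact hn
  · rintro ⟨n, hn⟩
    refine ⟨n, ?_⟩
    rw [← Subgroup.mem_comap, Subgroup.comap_upperCentralSeries_quotient_center]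
    exact Subgroup.upperCentralSeries_mono K (Nat.le_succ n) hn

lemma map_hypercenter (K : Type*) [Group K] :
    Subgroup.map (QuotientGroup.mk' (Subgroup.center K)) (hypercenter K)
      = hypercenter (K ⧸ Subgroup.center K) := by
  rw [← comap_hypercenter K]
  exact Subgroup.map_comap_eq_self_of_surjective (QuotientGroup.mk'_surjective _) _

lemma center_le_hypercenter (K : Type*) [Group K] :
    Subgroup.center K ≤ hypercenter K := by
  have : Subgroup.upperCentralSeries K 1 ≤ hypercenter K := le_iSup (Subgroup.upperCentralSeries K) 1
  rwa [Subgroup.upperCentralSeries_one] at this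


lemma center_step {p : ℕ} (hp : p.Prime) (K : Type*) [Group K] [Finite K]
    (h : ∃ N : Subgroup (K ⧸ Subgroup.center K), N.Normal ∧
      Nat.Coprime (Nat.card N) p ∧ ∃ m : ℕ, N.index = p ^ m) :
    ∃ N : Subgroup K, N.Normal ∧ Nat.Coprime (Nat.card N) p ∧ ∃ m : ℕ, N.index = p ^ m := by
  haveI : Fact p.Prime := ⟨hp⟩
  obtain ⟨Nbar, hNn, hNc, m, hNi⟩ := h
  set Z := Subgroup.center K
  set N : Subgroup K := Nbar.comap (QuotientGroup.mk' Z) with hNdef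
  haveI hNnorm : N.Normal := hNn.comap _
  have hNidx : N.index = p ^ m := by
    rw [hNdef, Subgroup.index_comap_of_surjective _ (QuotientGroup.mk'_surjective Z), hNi]
  -- a Sylow p-subgroup of N
  obtain ⟨P⟩ : Nonempty (Sylow p N) := inferInstance
  -- the image of P in K
  set PK : Subgroup K := (P : Subgroup N).map N.subtype with hPKdef
  have hPKle : PK ≤ N := Subgroup.map_subtype_le _
  -- image of PK in the quotient is a p-group inside Nbar, hence trivial
  have hPKcentral : PK ≤ Z := by
    have hPk : IsPGroup p PK := P.2.map N.subtype
    set Q : Subgroup (K ⧸ Z) := PK.map (QuotientGroup.mk' Z) with hQdef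
    have hQp : IsPGroup p Q := hPk.map _
    have hQle : Q ≤ Nbar := by
      rw [hQdef]
      rw [Subgroup.map_le_iff_le_comap]
      exact hPKle
    obtain ⟨k, hk⟩ := hQp.exists_card_eq
    have hdvd : Nat.card Q ∣ Nat.card Nbar := Subgroup.card_dvd_of_le hQle
    have : Nat.card Q = 1 := by
      rw [hk] at hdvd ⊢
      rcases Nat.eq_zero_or_pos k with hk0 | hk0
      · simp [hk0]
      · exfalso
        have hpd : p ∣ Nat.card Nbar := dvd_trans (dvd_pow_self p hk0.ne') hdvd
        exact hp.one_lt.ne' (Nat.Coprime.eq_one_of_dvd hNc.symm hpd)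
    have hQbot : Q = ⊥ := Subgroup.card_eq_one.mp this
    intro x hx
    have : (QuotientGroup.mk' Z) x ∈ Q := Subgroup.mem_map_of_mem _ hx
    rw [hQbot, Subgroup.mem_bot] at this
    have : x ∈ (QuotientGroup.mk' Z).ker := this
    rwa [QuotientGroup.ker_mk'] at this
  -- Burnside hypothesis: P is central in N
  have hP : Subgroup.normalizer (P : Set N) ≤ Subgroup.centralizer (P : Set N) := by
    refine le_trans le_top ?_
    intro g _
    rw [Subgroup.mem_centralizer_iff]
    intro x hx
    have hxZ : (x : K) ∈ Z := hPKcentral (Subgroup.mem_map_of_mem N.subtype hx)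
    have := (Subgroup.mem_center_iff.mp hxZ) (g : K)
    exact Subtype.ext (by push_cast; exact this.symm)
  haveI : FiniteIndex (P : Subgroup N) := inferInstance
  set M' : Subgroup N := (MonoidHom.transferSylow P hP).ker with hM'def
  have hcomp : Subgroup.IsComplement' M' (P : Subgroup N) :=
    MonoidHom.ker_transferSylow_isComplement' P hP
  have hM'coprime : ¬ p ∣ Nat.card M' := MonoidHom.not_dvd_card_ker_transferSylow P hP
  obtain ⟨a, ha⟩ := P.2.exists_card_eq
  have hM'idx : M'.index = p ^ a := by
    rw [hcomp.symm.index_eq_card, ha]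
  haveI hM'norm : M'.Normal := by rw [hM'def]; infer_instance
  set M : Subgroup K := M'.map N.subtype with hMdef
  have hMle : M ≤ N := Subgroup.map_subtype_le _
  have hMcard : Nat.card M = Nat.card M' :=
    (Nat.card_congr (Subgroup.equivMapOfInjective M' N.subtype N.subtype_injective).toEquiv).symm
  -- key: any subgroup of N with order coprime to p is contained in M'
  have hkey : ∀ D : Subgroup N, ¬ p ∣ Nat.card D → D ≤ M' := by
    intro D hD
    set E : Subgroup (N ⧸ M') := D.map (QuotientGroup.mk' M') with hEdef
    have hE1 : Nat.card E ∣ Nat.card D := by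
      exact Subgroup.card_dvd_of_surjective ((QuotientGroup.mk' M').subgroupMap D)
        ((QuotientGroup.mk' M').subgroupMap_surjective D)
    have hE2 : Nat.card E ∣ p ^ a := by
      have h1 : Nat.card E ∣ Nat.card (N ⧸ M') := Subgroup.card_subgroup_dvd_card E
      rwa [← Subgroup.index_eq_card, hM'idx] at h1
    obtain ⟨k, hka, hk⟩ := (Nat.dvd_prime_pow hp).mp hE2
    have hk0 : k = 0 := by
      by_contra hne
      exact hD (dvd_trans (dvd_trans (dvd_pow_self p hne) hk.symm.dvd) hE1)
    have hEbot : E = ⊥ := Subgroup.card_eq_one.mp (by rw [hk, hk0, pow_zero])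
    intro x hx
    have : (QuotientGroup.mk' M') x ∈ E := Subgroup.mem_map_of_mem _ hx
    rw [hEbot, Subgroup.mem_bot] at this
    have : x ∈ (QuotientGroup.mk' M').ker := this
    rwa [QuotientGroup.ker_mk'] at this
  -- M is normal in K
  haveI hMnorm : M.Normal := by
    constructor
    intro x hx g
    set φ := MulAut.conj g
    set C : Subgroup K := M.map φ.toMonoidHom with hCdef
    have hCle : C ≤ N := by
      rintro _ ⟨y, hy, rfl⟩
      exact hNnorm.conj_mem y (hMle hy) g
    have hCcard : Nat.card C = Nat.card M' := by
      rw [← hMcard]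
      exact (Nat.card_congr (Subgroup.equivMapOfInjective M φ.toMonoidHom
        φ.injective).toEquiv).symm
    set D : Subgroup N := C.subgroupOf N with hDdef
    have hDcard : Nat.card D = Nat.card C :=
      Nat.card_congr (Subgroup.subgroupOfEquivOfLe hCle).toEquiv
    have hDle : D ≤ M' := by
      apply hkey
      rw [hDcard, hCcard]
      exact hM'coprime
    have hxC : φ x ∈ C := Subgroup.mem_map_of_mem _ hx
    have hxN : φ x ∈ N := hCle hxC
    have : (⟨φ x, hxN⟩ : N) ∈ M' := hDle (Subgroup.mem_subgroupOf.mpr hxC)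
    exact Subgroup.mem_map_of_mem N.subtype this
  refine ⟨M, hMnorm, ?_, ⟨a + m, ?_⟩⟩
  · rw [hMcard]
    exact (hp.coprime_iff_not_dvd.mpr hM'coprime).symm
  · have hrel : M.relIndex N = p ^ a := by
      rw [Subgroup.relIndex, Subgroup.subgroupOf, hMdef,
        Subgroup.comap_map_eq_self_of_injective N.subtype_injective, hM'idx]
    have := Subgroup.relIndex_mul_index hMle
    rw [hrel, hNidx] at this
    rw [← this, pow_add]

universe u

lemma reverse_aux {p : ℕ} (hp : p.Prime) (n : ℕ) :
    ∀ (K : Type u) (_ : Group K) (_ : Finite K), Nat.card K = n →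
    (∃ N : Subgroup (K ⧸ hypercenter K), N.Normal ∧ Nat.Coprime (Nat.card N) p ∧
      ∃ m : ℕ, N.index = p ^ m) →
    (∃ N : Subgroup K, N.Normal ∧ Nat.Coprime (Nat.card N) p ∧ ∃ m : ℕ, N.index = p ^ m) := by
  induction n using Nat.strong_induction_on with
  | _ n ih =>
    intro K _ _ hcard hq
    by_cases hZ : Subgroup.center K = ⊥
    · have hb : hypercenter K = ⊥ := hypercenter_eq_bot hZ
      have e : K ⧸ hypercenter K ≃* K :=
        (QuotientGroup.quotientMulEquivOfEq hb).trans (QuotientGroup.quotientBot (G := K))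
      exact HNPC_of_mulEquiv hp e hq
    · set Z := Subgroup.center K with hZdef
      -- the quotient is smaller
      have hcardZ : 1 < Nat.card Z := Z.one_lt_card_iff_ne_bot.mpr hZ
      have hlt : Nat.card (K ⧸ Z) < n := by
        rw [← hcard, ← Subgroup.index_eq_card]
        have h1 : Z.index * Nat.card Z = Nat.card K := Z.index_mul_card
        have h2 : Z.index ≠ 0 := Subgroup.index_ne_zero_of_finite
        calc Z.index < Z.index * Nat.card Z :=
              lt_mul_of_one_lt_right (Nat.pos_of_ne_zero h2) hcardZ
          _ = Nat.card K := h1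
      -- transport the hypothesis to (K ⧸ Z) ⧸ hypercenter (K ⧸ Z)
      have e2 : (K ⧸ Z) ⧸ (hypercenter K).map (QuotientGroup.mk' Z) ≃* K ⧸ hypercenter K :=
        QuotientGroup.quotientQuotientEquivQuotient Z (hypercenter K) (center_le_hypercenter K)
      have e3 : (K ⧸ Z) ⧸ hypercenter (K ⧸ Z) ≃* K ⧸ hypercenter K :=
        (QuotientGroup.quotientMulEquivOfEq (map_hypercenter K)).symm.trans e2
      have hq2 := HNPC_of_mulEquiv hp e3.symm hq
      have := ih (Nat.card (K ⧸ Z)) hlt (K ⧸ Z) inferInstance inferInstance rfl hq2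
      exact center_step hp K this

theorem pNilpotent_iff_quotient_hypercenter_pNilpotent
    (p : ℕ) (hp : p.Prime) (K : Type*) [Group K] [Finite K] :
    HasNormalPComplement p K ↔ HasNormalPComplement p (K ⧸ hypercenter K) := by
  constructor
  · exact fun h => HNPC_of_surjective hp (QuotientGroup.mk' (hypercenter K))
      (QuotientGroup.mk'_surjective _) h
  · exact fun h => reverse_aux hp (Nat.card K) K inferInstance inferInstance rfl h
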